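/- The strategy ξ* is admissible (square-integrable with ∫₀ᵀ ξ*(t) dt = x) and is the unique minimizer of the execution-cost functional C over all admissible strategies: for every admissible strategy ξ that differs from ξ* on a set of positive Lebesgue measure, C(ξ*) < C(ξ). -/

import Mathlib

open MeasureTheory Set intervalIntegral

set_option maxHeartbeats 2000000

/-- Fubini on the triangle `0 ≤ s ≤ t ≤ T`. -/
lemma swapL (T : ℝ) (hT : 0 ≤ T) (f φ : ℝ → ℝ)
    (hf : IntegrableOn f (Icc 0 T)) (hφ : IntegrableOn φ (Icc 0 T)) :
    ∫ t in (0:ℝ)..T, φ t * ∫ s in (0:ℝ)..t, f s =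
      ∫ s in (0:ℝ)..T, f s * ∫ t in s..T, φ t := by
  set μT := volume.restrict (Ioc (0:ℝ) T) with hμT
  have hf' : Integrable f μT := hf.mono_set Ioc_subset_Icc_self
  have hφ' : Integrable φ μT := hφ.mono_set Ioc_subset_Icc_self
  have hs : MeasurableSet {p : ℝ × ℝ | p.2 ≤ p.1} :=
    measurableSet_le measurable_snd measurable_fst
  set F : ℝ → ℝ → ℝ := fun t s =>
    ({p : ℝ × ℝ | p.2 ≤ p.1}.indicator (fun p => φ p.1 * f p.2)) (t, s) with hF
  have hFint : Integrable (Function.uncurry F) (μT.prod μT) := by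
    have base : Integrable (fun p : ℝ × ℝ => φ p.1 * f p.2) (μT.prod μT) :=
      hφ'.mul_prod hf'
    have h2 : Function.uncurry F =
        {p : ℝ × ℝ | p.2 ≤ p.1}.indicator (fun p => φ p.1 * f p.2) := by
      funext p; cases p; rfl
    rw [h2]
    exact base.indicator hs
  have hL : (∫ t in (0:ℝ)..T, φ t * ∫ s in (0:ℝ)..t, f s) =
      ∫ t, (∫ s, F t s ∂μT) ∂μT := by
    rw [integral_of_le hT]
    refine setIntegral_congr_fun measurableSet_Ioc ?_
    intro t ht
    show φ t * (∫ s in (0:ℝ)..t, f s) = ∫ s, F t s ∂μT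
    have h1 : (fun s => F t s) = (Iic t).indicator (fun s => φ t * f s) := by
      funext s
      simp only [hF, Set.indicator, Set.mem_setOf_eq, Set.mem_Iic]
    rw [h1, MeasureTheory.integral_indicator measurableSet_Iic,
      Measure.restrict_restrict measurableSet_Iic]
    have h2 : Iic t ∩ Ioc 0 T = Ioc 0 t := by
      ext z; simp only [mem_inter_iff, mem_Iic, mem_Ioc]
      exact ⟨fun ⟨a, b, _⟩ => ⟨b, a⟩, fun ⟨a, b⟩ => ⟨b, a, b.trans ht.2⟩⟩
    rw [h2, MeasureTheory.integral_const_mul, integral_of_le ht.1.le]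
  have hR : (∫ s in (0:ℝ)..T, f s * ∫ t in s..T, φ t) =
      ∫ s, (∫ t, F t s ∂μT) ∂μT := by
    rw [integral_of_le hT]
    refine setIntegral_congr_fun measurableSet_Ioc ?_
    intro s hsm
    show f s * (∫ t in s..T, φ t) = ∫ t, F t s ∂μT
    have h1 : (fun t => F t s) = (Ici s).indicator (fun t => φ t * f s) := by
      funext t
      simp only [hF, Set.indicator, Set.mem_setOf_eq, Set.mem_Ici]
    rw [h1, MeasureTheory.integral_indicator measurableSet_Ici,
      Measure.restrict_restrict measurableSet_Ici]
    have h2 : Ici s ∩ Ioc 0 T = Icc s T := by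
      ext z; simp only [mem_inter_iff, mem_Ici, mem_Ioc, mem_Icc]
      exact ⟨fun ⟨a, _, b⟩ => ⟨a, b⟩, fun ⟨a, b⟩ => ⟨a, hsm.1.trans_le a, b⟩⟩
    rw [h2, MeasureTheory.integral_mul_const, integral_Icc_eq_integral_Ioc,
      ← integral_of_le hsm.2, mul_comm]
  rw [hL, hR]
  exact integral_integral_swap hFint

/-- The strategy `ξ*` is admissible (square-integrable with `∫₀ᵀ ξ* = x`) and is the
unique minimizer of the execution-cost functional `C` over all admissible strategies. -/
theorem stmt_0 (T x η γ ρ : ℝ) (hT : 0 < T) (hx : 0 < x) (hη : 0 < η) (hγ : 0 < γ)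
    (hρ : 0 < ρ) (k D : ℝ) (hk : k = Real.sqrt (ρ * (ρ + γ / η)))
    (hD : D = k * ρ * T * Real.cosh (k * T / 2) * (k ^ 2 * η - γ * ρ) +
      Real.sinh (k * T / 2) * (γ * ρ * (2 * ρ - k ^ 2 * T) + k ^ 4 * η * T))
    (ξstar : ℝ → ℝ)
    (hξstar : ∀ t : ℝ, ξstar t = k * x * ((k ^ 2 * η - γ * ρ) *
      (ρ * Real.cosh (k * T / 2) + k * Real.sinh (k * T / 2)) +
      γ * ρ ^ 2 * Real.cosh (k * (t - T / 2))) / D)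
    (C : (ℝ → ℝ) → ℝ)
    (hC : ∀ ξ : ℝ → ℝ, C ξ = ∫ t in (0:ℝ)..T,
      (η * (ξ t) ^ 2 + γ * ξ t * ∫ s in (0:ℝ)..t, ξ s * Real.exp (-ρ * (t - s)))) :
    (MemLp ξstar 2 (volume.restrict (Icc 0 T)) ∧ (∫ t in (0:ℝ)..T, ξstar t) = x) ∧
    (∀ ξ : ℝ → ℝ, MemLp ξ 2 (volume.restrict (Icc 0 T)) → (∫ t in (0:ℝ)..T, ξ t) = x →
      ¬ (ξ =ᵐ[volume.restrict (Icc 0 T)] ξstar) → C ξstar < C ξ) := by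
  have hη0 : η ≠ 0 := hη.ne'
  have hρ0 : ρ ≠ 0 := hρ.ne'
  have hγ0 : γ ≠ 0 := hγ.ne'
  have harg : 0 ≤ ρ * (ρ + γ / η) := by positivity
  have hk2 : k ^ 2 = ρ ^ 2 + γ * ρ / η := by rw [hk, Real.sq_sqrt harg]; ring
  have hkpos : 0 < k := by rw [hk]; exact Real.sqrt_pos.2 (by positivity)
  have hk0 : k ≠ 0 := hkpos.ne'
  have hkd : k ^ 2 * η - γ * ρ = η * ρ ^ 2 := by rw [hk2]; field_simp; ring
  have hdd : ρ ^ 2 - k ^ 2 = -(γ * ρ / η) := by rw [hk2]; ring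
  have hshpos : 0 < Real.sinh (k * T / 2) := by have := Real.sinh_pos_iff (x := k * T / 2); exact this.2 (by positivity)
  have hchpos : 0 < Real.cosh (k * T / 2) := Real.cosh_pos _
  have hD2 : D = η * ρ ^ 2 * (k * ρ * T * Real.cosh (k * T / 2)
      + k ^ 2 * T * Real.sinh (k * T / 2)) + 2 * γ * ρ ^ 2 * Real.sinh (k * T / 2) := by
    rw [hD]
    linear_combination (k * ρ * T * Real.cosh (k * T / 2)
      + k ^ 2 * T * Real.sinh (k * T / 2)) * hkd
  have hDpos : 0 < D := by rw [hD2]; positivity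
  have hD0 : D ≠ 0 := hDpos.ne'
  -- abbreviations
  set A : ℝ := η * ρ ^ 2 * (ρ * Real.cosh (k * T / 2) + k * Real.sinh (k * T / 2)) with hA
  set B : ℝ := γ * ρ ^ 2 with hB
  set Aq : ℝ := η * ρ * (ρ * Real.cosh (k * T / 2) + k * Real.sinh (k * T / 2)) with hAq
  have hAρ : A = ρ * Aq := by rw [hA, hAq]; ring
  have hdd3 : η * ρ ^ 2 - η * k ^ 2 = -(γ * ρ) := by linarith [hkd]
  have hξ' : ∀ u : ℝ, ξstar u = k * x * (A + B * Real.cosh (k * (u - T / 2))) / D := by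
    intro u; rw [hξstar, hkd]
  have hcont : Continuous ξstar := by
    have hfe : ξstar = fun u => k * x * (A + B * Real.cosh (k * (u - T / 2))) / D :=
      funext hξ'
    rw [hfe]; fun_prop
  haveI hfin : IsFiniteMeasure (volume.restrict (Icc (0:ℝ) T)) :=
    ⟨by rw [Measure.restrict_apply_univ]; exact measure_Icc_lt_top⟩
  have hmemstar : MemLp ξstar 2 (volume.restrict (Icc 0 T)) := by
    obtain ⟨M, hM⟩ := (isCompact_Icc : IsCompact (Icc (0:ℝ) T)).exists_bound_of_continuousOn
      hcont.continuousOn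
    exact MemLp.of_bound hcont.aestronglyMeasurable.restrict M
      ((ae_restrict_iff' measurableSet_Icc).2 (Filter.Eventually.of_forall fun t ht => hM t ht))
  -- the integral of ξstar
  have hT0 : k * ((0:ℝ) - T / 2) = -(k * T / 2) := by ring
  have hTT : k * (T - T / 2) = k * T / 2 := by ring
  have hintstar : (∫ t in (0:ℝ)..T, ξstar t) = x := by
    have hprim : ∀ u ∈ uIcc (0:ℝ) T, HasDerivAt
        (fun u => k * x * (A * u + B / k * Real.sinh (k * (u - T / 2))) / D)
        (ξstar u) u := by
      intro u _
      have h1 : HasDerivAt (fun u : ℝ => k * (u - T / 2)) k u := by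
        simpa using ((hasDerivAt_id u).sub_const (T / 2)).const_mul k
      have h2 := h1.sinh
      have h3 := (((hasDerivAt_id u).const_mul A).add (h2.const_mul (B / k)))
      have h4 := (h3.const_mul (k * x)).div_const D
      refine h4.congr_deriv (Eq.symm ?_)
      rw [hξ']
      field_simp
    rw [integral_eq_sub_of_hasDerivAt hprim (hcont.intervalIntegrable 0 T)]
    rw [hTT]
    rw [hT0, Real.sinh_neg]
    rw [hA, hB, hD2]
    field_simp
    ring
  refine ⟨⟨hmemstar, hintstar⟩, ?_⟩
  intro ξ hmem hintx hne
  have hTle : (0:ℝ) ≤ T := hT.le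
  have huIcc : uIcc (0:ℝ) T = Icc 0 T := uIcc_of_le hTle
  set h : ℝ → ℝ := fun t => ξ t - ξstar t with hh
  have hmemh : MemLp h 2 (volume.restrict (Icc 0 T)) := hmem.sub hmemstar
  have hhint : IntegrableOn h (Icc 0 T) := hmemh.integrable one_le_two
  have hξint : IntegrableOn ξ (Icc 0 T) := hmem.integrable one_le_two
  have hh2int : IntegrableOn (fun t => h t ^ 2) (Icc 0 T) := hmemh.integrable_sq
  -- conversion to interval integrability
  have hIO : ∀ f : ℝ → ℝ, IntegrableOn f (Icc 0 T) → IntervalIntegrable f volume 0 T := by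
    intro f hf
    rw [intervalIntegrable_iff_integrableOn_Ioc_of_le hTle]
    exact hf.mono_set Ioc_subset_Icc_self
  have hinth : (∫ t in (0:ℝ)..T, h t) = 0 := by
    simp only [hh]
    rw [intervalIntegral.integral_sub (hIO ξ hξint) (hcont.intervalIntegrable 0 T),
      hintx, hintstar, sub_self]
  -- bounded-multiplier integrability
  have hmul : ∀ φ ψ : ℝ → ℝ, ContinuousOn φ (Icc 0 T) → IntegrableOn ψ (Icc 0 T) →
      IntegrableOn (fun t => φ t * ψ t) (Icc 0 T) := by
    intro φ ψ hφ hψ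
    obtain ⟨M, hM⟩ := isCompact_Icc.exists_bound_of_continuousOn hφ
    exact hψ.bdd_mul (hφ.aestronglyMeasurable measurableSet_Icc)
      ((ae_restrict_iff' measurableSet_Icc).2 (Filter.Eventually.of_forall hM))
  set g : ℝ → ℝ := fun s => h s * Real.exp (ρ * s) with hg
  have hgint : IntegrableOn g (Icc 0 T) := by
    have := hmul (fun s => Real.exp (ρ * s)) h (by fun_prop) hhint
    refine this.congr_fun (fun s _ => ?_) measurableSet_Icc
    simp only [hg]; ring
  set G : ℝ → ℝ := fun t => ∫ s in (0:ℝ)..t, g s with hG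
  have hGcont : ContinuousOn G (Icc 0 T) := by
    have := intervalIntegral.continuousOn_primitive_interval
      (a := (0:ℝ)) (b := T) (μ := volume) (f := g) (by rwa [huIcc])
    rwa [huIcc] at this
  set Gstar : ℝ → ℝ := fun t => ∫ s in (0:ℝ)..t, ξstar s * Real.exp (ρ * s) with hGstar
  have hgstarc : Continuous fun s : ℝ => ξstar s * Real.exp (ρ * s) := by fun_prop
  have hGstarcont : Continuous Gstar :=
    intervalIntegral.continuous_primitive (fun a b => hgstarc.intervalIntegrable a b) 0
  -- factor the exponential kernel
  have hfact : ∀ (f : ℝ → ℝ) (t : ℝ), (∫ s in (0:ℝ)..t, f s * Real.exp (-ρ * (t - s)))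
      = (∫ s in (0:ℝ)..t, f s * Real.exp (ρ * s)) * Real.exp (-(ρ * t)) := by
    intro f t
    rw [← intervalIntegral.integral_mul_const]
    refine intervalIntegral.integral_congr fun s _ => ?_
    rw [show -ρ * (t - s) = ρ * s + -(ρ * t) by ring, Real.exp_add]
    ring
  have hCfact : ∀ ζ : ℝ → ℝ, C ζ = ∫ t in (0:ℝ)..T,
      (η * ζ t ^ 2 + γ * ζ t *
        ((∫ s in (0:ℝ)..t, ζ s * Real.exp (ρ * s)) * Real.exp (-(ρ * t)))) := by
    intro ζ
    rw [hC ζ]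
    refine intervalIntegral.integral_congr fun t _ => ?_
    rw [hfact ζ t]
  -- split of the running integral
  have hGsplit : ∀ t ∈ Icc (0:ℝ) T, (∫ s in (0:ℝ)..t, ξ s * Real.exp (ρ * s))
      = Gstar t + G t := by
    intro t ht
    have h1 : IntervalIntegrable (fun s => ξstar s * Real.exp (ρ * s)) volume 0 t :=
      hgstarc.intervalIntegrable 0 t
    have h2 : IntervalIntegrable g volume 0 t := by
      rw [intervalIntegrable_iff_integrableOn_Ioc_of_le ht.1]
      exact (hgint.mono_set (Icc_subset_Icc le_rfl ht.2)).mono_set Ioc_subset_Icc_self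
    rw [hGstar, hG, ← intervalIntegral.integral_add h1 h2]
    refine intervalIntegral.integral_congr fun s _ => ?_
    simp only [hg, hh]; ring
  -- the integrand pieces
  set X1 : ℝ → ℝ := fun t => (2 * η * ξstar t) * h t with hX1
  set X2 : ℝ → ℝ := fun t => γ * ((ξstar t * Real.exp (-(ρ * t))) * G t) with hX2
  set X3 : ℝ → ℝ := fun t => (γ * (Gstar t * Real.exp (-(ρ * t)))) * h t with hX3
  set Q1 : ℝ → ℝ := fun t => η * h t ^ 2 with hQ1
  set Q2 : ℝ → ℝ := fun t => (γ * (G t * Real.exp (-(ρ * t)))) * h t with hQ2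
  have hX1int : IntegrableOn X1 (Icc 0 T) := hmul _ h (by fun_prop) hhint
  have hX2int : IntegrableOn X2 (Icc 0 T) := by
    refine (ContinuousOn.integrableOn_compact isCompact_Icc ?_)
    exact continuousOn_const.mul (((hcont.continuousOn.mul (by fun_prop)).mul hGcont))
  have hX3int : IntegrableOn X3 (Icc 0 T) := hmul _ h (by fun_prop) hhint
  have hQ1int : IntegrableOn Q1 (Icc 0 T) := hh2int.const_mul η
  have hQ2int : IntegrableOn Q2 (Icc 0 T) :=
    hmul _ h (continuousOn_const.mul (hGcont.mul (by fun_prop))) hhint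
  -- main decomposition
  have hkey : C ξ = C ξstar + (∫ t in (0:ℝ)..T, (X1 t + X2 t + X3 t))
      + (∫ t in (0:ℝ)..T, (Q1 t + Q2 t)) := by
    rw [hCfact ξ, hCfact ξstar]
    have i1 : IntervalIntegrable (fun t => η * ξstar t ^ 2 + γ * ξstar t *
        ((∫ s in (0:ℝ)..t, ξstar s * Real.exp (ρ * s)) * Real.exp (-(ρ * t)))) volume 0 T := by
      apply Continuous.intervalIntegrable
      have : Continuous fun t => (∫ s in (0:ℝ)..t, ξstar s * Real.exp (ρ * s)) := by
        rw [show (fun t => (∫ s in (0:ℝ)..t, ξstar s * Real.exp (ρ * s))) = Gstar from rfl]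
        exact hGstarcont
      fun_prop
    have i2 : IntervalIntegrable (fun t => X1 t + X2 t + X3 t) volume 0 T :=
      hIO _ (((hX1int.add hX2int).add hX3int))
    have i3 : IntervalIntegrable (fun t => Q1 t + Q2 t) volume 0 T :=
      hIO _ (hQ1int.add hQ2int)
    rw [← intervalIntegral.integral_add i1 i2, ← intervalIntegral.integral_add (i1.add i2) i3]
    refine intervalIntegral.integral_congr fun t ht => ?_
    rw [huIcc] at ht
    rw [hGsplit t ht]
    have hxt : ξ t = ξstar t + h t := by simp only [hh]; ring
    rw [hxt]
    simp only [hX1, hX2, hX3, hQ1, hQ2, hGstar, hG]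
    ring
  -- the cross term vanishes
  set φf : ℝ → ℝ := fun t => ξstar t * Real.exp (-(ρ * t)) with hφf
  have hφfc : Continuous φf := by rw [hφf]; fun_prop
  set Iφ : ℝ → ℝ := fun s => ∫ t in s..T, φf t with hIφ
  have hIφcont : Continuous Iφ := by
    have h1 : Continuous fun s : ℝ => ∫ t in T..s, φf t :=
      intervalIntegral.continuous_primitive (fun a b => hφfc.intervalIntegrable a b) T
    have h2 : Iφ = fun s => -(∫ t in T..s, φf t) := by
      funext s; simp only [hIφ]; exact intervalIntegral.integral_symm T s
    rw [h2]; exact h1.neg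
  set W : ℝ → ℝ := fun s => 2 * η * ξstar s + γ * (Gstar s * Real.exp (-(ρ * s)))
      + γ * (Real.exp (ρ * s) * Iφ s) with hW
  -- antiderivatives for the Euler–Lagrange computation
  set Φ₁ : ℝ → ℝ := fun u => k * x / D * (Aq * Real.exp (ρ * u)
      + (-(η * ρ)) * (Real.exp (ρ * u) * (ρ * Real.cosh (k * (u - T / 2))
        - k * Real.sinh (k * (u - T / 2))))) with hΦ₁
  set Φ₂ : ℝ → ℝ := fun u => k * x / D * (Aq * (-Real.exp (-(ρ * u)))
      + (η * ρ) * (Real.exp (-(ρ * u)) * (ρ * Real.cosh (k * (u - T / 2))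
        + k * Real.sinh (k * (u - T / 2))))) with hΦ₂
  have hE : ∀ u : ℝ, HasDerivAt (fun u => Real.exp (ρ * u)) (Real.exp (ρ * u) * ρ) u := by
    intro u
    simpa using ((hasDerivAt_id u).const_mul ρ).exp
  have hE2 : ∀ u : ℝ, HasDerivAt (fun u => Real.exp (-(ρ * u)))
      (Real.exp (-(ρ * u)) * (-ρ)) u := by
    intro u
    simpa using (((hasDerivAt_id u).const_mul ρ).neg).exp
  have hCo : ∀ u : ℝ, HasDerivAt (fun u => Real.cosh (k * (u - T / 2)))
      (Real.sinh (k * (u - T / 2)) * k) u := by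
    intro u
    simpa using (((hasDerivAt_id u).sub_const (T / 2)).const_mul k).cosh
  have hSi : ∀ u : ℝ, HasDerivAt (fun u => Real.sinh (k * (u - T / 2)))
      (Real.cosh (k * (u - T / 2)) * k) u := by
    intro u
    simpa using (((hasDerivAt_id u).sub_const (T / 2)).const_mul k).sinh
  have hdΦ₁ : ∀ u : ℝ, HasDerivAt Φ₁ (ξstar u * Real.exp (ρ * u)) u := by
    intro u
    have tot := ((((hE u).const_mul Aq).add
      (((hE u).mul (((hCo u).const_mul ρ).sub ((hSi u).const_mul k))).const_mul
        (-(η * ρ)))).const_mul (k * x / D))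
    refine tot.congr_deriv (Eq.symm ?_)
    simp only [Pi.sub_apply]
    rw [hξ' u, hB, hAρ]
    linear_combination (k * x * Real.exp (ρ * u) * Real.cosh (k * (u - T / 2)) * ρ / D) * hdd3
  have hdΦ₂ : ∀ u : ℝ, HasDerivAt Φ₂ (φf u) u := by
    intro u
    have tot := ((((hE2 u).neg.const_mul Aq).add
      (((hE2 u).mul (((hCo u).const_mul ρ).add ((hSi u).const_mul k))).const_mul
        (η * ρ))).const_mul (k * x / D))
    refine tot.congr_deriv (Eq.symm ?_)
    simp only [hφf, Pi.add_apply]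
    rw [hξ' u, hB, hAρ]
    linear_combination (k * x * Real.exp (-(ρ * u)) * Real.cosh (k * (u - T / 2)) * ρ / D) * hdd3
  have hI1 : ∀ s : ℝ, Gstar s = Φ₁ s - Φ₁ 0 := by
    intro s
    simp only [hGstar]
    exact intervalIntegral.integral_eq_sub_of_hasDerivAt (fun u _ => hdΦ₁ u)
      (hgstarc.intervalIntegrable 0 s)
  have hI2 : ∀ s : ℝ, Iφ s = Φ₂ T - Φ₂ s := by
    intro s
    simp only [hIφ]
    exact intervalIntegral.integral_eq_sub_of_hasDerivAt (fun u _ => hdΦ₂ u)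
      (hφfc.intervalIntegrable s T)
  have hWconst : ∀ s ∈ Icc (0:ℝ) T, W s = W 0 := by
    intro s _
    simp only [hW]
    rw [hI1 s, hI1 0, hI2 s, hI2 0]
    simp only [hΦ₁, hΦ₂]
    rw [hξ' s, hξ' 0]
    simp only [hT0, hTT, Real.cosh_neg, Real.sinh_neg, mul_zero, Real.exp_zero, neg_zero,
      Real.exp_neg]
    rw [hB, hAq]
    field_simp
    ring
  -- the cross term vanishes
  have hφfint : IntegrableOn φf (Icc 0 T) := hφfc.integrableOn_Icc
  have hswap : (∫ t in (0:ℝ)..T, φf t * G t) = ∫ s in (0:ℝ)..T, g s * Iφ s := by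
    have hs := swapL T hTle g φf hgint hφfint
    simp only [hG, hIφ]
    exact hs
  have hgIφint : IntegrableOn (fun s => γ * (g s * Iφ s)) (Icc 0 T) := by
    have := hmul (fun s => γ * Iφ s) g (by fun_prop) hgint
    refine this.congr_fun (fun s _ => by ring) measurableSet_Icc
  have hX0 : (∫ t in (0:ℝ)..T, (X1 t + X2 t + X3 t)) = 0 := by
    have e1 : (∫ t in (0:ℝ)..T, (X1 t + X2 t + X3 t))
        = (∫ t in (0:ℝ)..T, X1 t) + (∫ t in (0:ℝ)..T, X2 t) + (∫ t in (0:ℝ)..T, X3 t) := by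
      have h12 : IntegrableOn (fun t => X1 t + X2 t) (Icc 0 T) := hX1int.add hX2int
      rw [intervalIntegral.integral_add (hIO _ h12) (hIO _ hX3int),
        intervalIntegral.integral_add (hIO _ hX1int) (hIO _ hX2int)]
    have e2 : (∫ t in (0:ℝ)..T, X2 t) = γ * ∫ s in (0:ℝ)..T, g s * Iφ s := by
      rw [← hswap, ← intervalIntegral.integral_const_mul]
    have h1g : IntegrableOn (fun t => X1 t + γ * (g t * Iφ t)) (Icc 0 T) :=
      hX1int.add hgIφint
    have hsum : IntervalIntegrable (fun t => X1 t + γ * (g t * Iφ t)) volume 0 T :=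
      hIO _ h1g
    have e3 : (∫ t in (0:ℝ)..T, X1 t) + γ * (∫ s in (0:ℝ)..T, g s * Iφ s)
        + (∫ t in (0:ℝ)..T, X3 t) = ∫ s in (0:ℝ)..T, h s * W 0 := by
      rw [← intervalIntegral.integral_const_mul,
        ← intervalIntegral.integral_add (hIO _ hX1int) (hIO _ hgIφint),
        ← intervalIntegral.integral_add hsum (hIO _ hX3int)]
      refine intervalIntegral.integral_congr fun s hs => ?_
      rw [huIcc] at hs
      rw [← hWconst s hs]
      simp only [hW, hX1, hX3, hg]; ring
    rw [e1, e2, e3, intervalIntegral.integral_mul_const, hinth, zero_mul]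
  -- positivity of the quadratic remainder
  set p : ℝ → ℝ := fun t => G t * g t with hp
  have hpint : IntegrableOn p (Icc 0 T) := hmul G g hGcont hgint
  have hPG : ∀ u ∈ Icc (0:ℝ) T, (∫ s in (0:ℝ)..u, p s) = G u ^ 2 / 2 := by
    intro u hu
    have hgu : IntegrableOn g (Icc 0 u) := hgint.mono_set (Icc_subset_Icc le_rfl hu.2)
    have hpu : IntegrableOn p (Icc 0 u) := hpint.mono_set (Icc_subset_Icc le_rfl hu.2)
    have hIOu : ∀ f : ℝ → ℝ, IntegrableOn f (Icc 0 u) → IntervalIntegrable f volume 0 u := by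
      intro f hf
      rw [intervalIntegrable_iff_integrableOn_Ioc_of_le hu.1]
      exact hf.mono_set Ioc_subset_Icc_self
    have hswu := swapL u hu.1 g g hgu hgu
    have hL : (∫ t in (0:ℝ)..u, g t * ∫ s in (0:ℝ)..t, g s) = ∫ s in (0:ℝ)..u, p s := by
      refine intervalIntegral.integral_congr fun t _ => ?_
      simp only [hp, hG]; ring
    have hGu : (∫ s in (0:ℝ)..u, g s) = G u := by simp only [hG]
    have hR : (∫ s in (0:ℝ)..u, g s * ∫ t in s..u, g t)
        = G u * G u - ∫ s in (0:ℝ)..u, p s := by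
      have hsub : ∀ s ∈ uIcc (0:ℝ) u, g s * (∫ t in s..u, g t) = G u * g s - p s := by
        intro s hsm
        rw [uIcc_of_le hu.1] at hsm
        have hsu : (∫ t in s..u, g t) = G u - G s := by
          simp only [hG]
          have h0u : IntervalIntegrable g volume 0 u := hIOu g hgu
          have h0s : IntervalIntegrable g volume 0 s := by
            rw [intervalIntegrable_iff_integrableOn_Ioc_of_le hsm.1]
            exact (hgu.mono_set (Icc_subset_Icc le_rfl hsm.2)).mono_set Ioc_subset_Icc_self
          exact (intervalIntegral.integral_interval_sub_left h0u h0s).symm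
        rw [hsu]; simp only [hp, hG]; ring
      rw [intervalIntegral.integral_congr hsub,
        intervalIntegral.integral_sub ((hIOu g hgu).const_mul (G u)) (hIOu p hpu),
        intervalIntegral.integral_const_mul, hGu]
    rw [hL, hR] at hswu
    linarith
  set w : ℝ → ℝ := fun u => 2 * ρ * Real.exp (-(2 * ρ * u)) with hw
  have hwc : Continuous w := by rw [hw]; fun_prop
  have hdecomp : ∀ t : ℝ, (∫ u in t..T, w u)
      = Real.exp (-(2 * ρ * t)) - Real.exp (-(2 * ρ * T)) := by
    intro t
    have hAnti : ∀ u ∈ uIcc t T, HasDerivAt (fun u => -Real.exp (-(2 * ρ * u))) (w u) u := by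
      intro u _
      have hd := (((hasDerivAt_id u).const_mul (2 * ρ)).neg.exp).neg
      refine hd.congr_deriv (Eq.symm ?_)
      simp only [hw, id_eq, mul_one, Pi.neg_apply]
      ring
    rw [intervalIntegral.integral_eq_sub_of_hasDerivAt hAnti (hwc.intervalIntegrable t T)]
    ring
  have hwint : IntegrableOn w (Icc 0 T) := hwc.integrableOn_Icc
  have hIwcont : Continuous fun t : ℝ => ∫ u in t..T, w u := by
    have : (fun t : ℝ => ∫ u in t..T, w u)
        = fun t => Real.exp (-(2 * ρ * t)) - Real.exp (-(2 * ρ * T)) := funext hdecomp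
    rw [this]; fun_prop
  have hpIint : IntegrableOn (fun t => p t * ∫ u in t..T, w u) (Icc 0 T) := by
    have := hmul (fun t => ∫ u in t..T, w u) p hIwcont.continuousOn hpint
    refine this.congr_fun (fun t _ => by ring) measurableSet_Icc
  have hJ : 0 ≤ ∫ t in (0:ℝ)..T, (G t * Real.exp (-(ρ * t))) * h t := by
    have e0 : (∫ t in (0:ℝ)..T, (G t * Real.exp (-(ρ * t))) * h t)
        = ∫ t in (0:ℝ)..T, (p t * Real.exp (-(2 * ρ * T)) + p t * ∫ u in t..T, w u) := by
      refine intervalIntegral.integral_congr fun t _ => ?_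
      have he : Real.exp (-(ρ * t)) = Real.exp (ρ * t) * Real.exp (-(2 * ρ * t)) := by
        rw [← Real.exp_add]; ring_nf
      rw [hdecomp t]
      simp only [hp, hg]
      rw [he]
      ring
    have e1 : (∫ t in (0:ℝ)..T, p t * Real.exp (-(2 * ρ * T)))
        = (G T ^ 2 / 2) * Real.exp (-(2 * ρ * T)) := by
      rw [intervalIntegral.integral_mul_const, hPG T ⟨hTle, le_rfl⟩]
    have e2 : (∫ t in (0:ℝ)..T, p t * ∫ u in t..T, w u)
        = ∫ t in (0:ℝ)..T, w t * (G t ^ 2 / 2) := by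
      have hsw := (swapL T hTle p w hpint hwint).symm
      -- hsw : ∫ s in 0..T, p s * ∫ t in s..T, w t = ∫ t in 0..T, w t * ∫ s in 0..t, p s
      rw [hsw]
      refine intervalIntegral.integral_congr fun t ht => ?_
      rw [huIcc] at ht
      rw [hPG t ht]
    rw [e0, intervalIntegral.integral_add ((hIO p hpint).mul_const _) (hIO _ hpIint), e1, e2]
    have hpos1 : 0 ≤ (G T ^ 2 / 2) * Real.exp (-(2 * ρ * T)) := by positivity
    have hpos2 : 0 ≤ ∫ t in (0:ℝ)..T, w t * (G t ^ 2 / 2) := by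
      refine intervalIntegral.integral_nonneg hTle fun u _ => ?_
      have : 0 < w u := by simp only [hw]; positivity
      positivity
    linarith
  have hh2pos : 0 < ∫ t in (0:ℝ)..T, h t ^ 2 := by
    rw [integral_of_le hTle, ← integral_Icc_eq_integral_Ioc]
    have hnn : 0 ≤ ∫ t in Icc (0:ℝ) T, h t ^ 2 :=
      integral_nonneg fun t => sq_nonneg _
    rcases eq_or_lt_of_le hnn with heq | hlt
    · exfalso
      have hz := (integral_eq_zero_iff_of_nonneg_ae
        (Filter.Eventually.of_forall fun t => sq_nonneg (h t)) hh2int).1 heq.symm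
      apply hne
      filter_upwards [hz] with t ht
      have ht2 : h t ^ 2 = 0 := ht
      have : h t = 0 := by
        have := sq_eq_zero_iff.1 ht2
        exact this
      have : ξ t - ξstar t = 0 := this
      linarith
    · exact hlt
  have hQpos : 0 < ∫ t in (0:ℝ)..T, (Q1 t + Q2 t) := by
    have eq1 : (∫ t in (0:ℝ)..T, Q1 t) = η * ∫ t in (0:ℝ)..T, h t ^ 2 := by
      simp only [hQ1]
      exact intervalIntegral.integral_const_mul η _
    have eq2 : (∫ t in (0:ℝ)..T, Q2 t)
        = γ * ∫ t in (0:ℝ)..T, (G t * Real.exp (-(ρ * t))) * h t := by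
      rw [← intervalIntegral.integral_const_mul]
      refine intervalIntegral.integral_congr fun t _ => ?_
      simp only [hQ2]; ring
    rw [intervalIntegral.integral_add (hIO _ hQ1int) (hIO _ hQ2int), eq1, eq2]
    have h1 : 0 < η * ∫ t in (0:ℝ)..T, h t ^ 2 := mul_pos hη hh2pos
    have h2 : 0 ≤ γ * ∫ t in (0:ℝ)..T, (G t * Real.exp (-(ρ * t))) * h t :=
      mul_nonneg hγ.le hJ
    linarith
  rw [hkey, hX0]
  linarith
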